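/- Let ℰ = {x ∈ ℝⁿ : Σᵢ (xᵢ/aᵢ)² ≤ 1} and for 0 < h ≤ aₙ let H_h⁻ = {x : xₙ ≥ aₙ - h}. Then vol_n(ℰ ∩ H_h⁻) ≥ (2^{(n+1)/2} vol_{n-1}(B₂^{n-1}) ∏_{i=1}^{n-1} aᵢ / ((n+1) aₙ^{(n-1)/2})) · h^{(n+1)/2} (1 - h/(2aₙ))^{(n-1)/2}. -/

import Mathlib

open MeasureTheory Finset

private lemma ellVol (m : ℕ) (b : Fin m → ℝ) (hb : ∀ i, 0 < b i) (s : ℝ) (hs : 0 < s) :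
    volume {y : Fin m → ℝ | ∑ i, (y i / b i) ^ 2 ≤ s}
      = ENNReal.ofReal (s ^ ((m : ℝ)/2) * ∏ i, b i) *
        volume {y : Fin m → ℝ | ∑ i, (y i) ^ 2 ≤ 1} := by
  set L := Matrix.toLin' (Matrix.diagonal (fun i => Real.sqrt s * b i)) with hL
  have hLy : ∀ y i, L y i = Real.sqrt s * b i * y i := by
    intro y i
    simp [hL, Matrix.toLin'_apply, Matrix.mulVec_diagonal]
  have himg : {y : Fin m → ℝ | ∑ i, (y i / b i) ^ 2 ≤ s}
      = L '' {y : Fin m → ℝ | ∑ i, (y i) ^ 2 ≤ 1} := by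
    ext y
    constructor
    · intro hy
      refine ⟨fun i => y i / (Real.sqrt s * b i), ?_, ?_⟩
      · have : ∀ i, (y i / (Real.sqrt s * b i)) ^ 2 = (y i / b i) ^ 2 / s := by
          intro i
          rw [mul_comm, ← div_div, div_pow, div_pow, Real.sq_sqrt hs.le]
        simp only [Set.mem_setOf_eq, this, ← Finset.sum_div]
        rw [div_le_one hs]
        exact hy
      · ext i
        rw [hLy, mul_div_cancel₀]
        exact (mul_pos (Real.sqrt_pos.2 hs) (hb i)).ne'
    · rintro ⟨z, hz, rfl⟩
      simp only [Set.mem_setOf_eq, hLy]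
      have : ∀ i, (Real.sqrt s * b i * z i / b i) ^ 2 = s * (z i)^2 := by
        intro i
        rw [mul_comm (Real.sqrt s) (b i), mul_assoc, mul_div_cancel_left₀ _ (hb i).ne',
          mul_pow, Real.sq_sqrt hs.le]
      simp only [this, ← Finset.mul_sum]
      calc s * ∑ i, z i ^ 2 ≤ s * 1 := by
            exact mul_le_mul_of_nonneg_left hz hs.le
        _ = s := mul_one s
  rw [himg, Measure.addHaar_image_linearMap]
  congr 1
  rw [LinearMap.det_toLin', Matrix.det_diagonal]
  congr 1
  rw [Finset.prod_mul_distrib, Finset.prod_const,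
    abs_of_nonneg (mul_nonneg (by positivity) (Finset.prod_nonneg (fun i _ => (hb i).le)))]
  congr 1
  rw [← Real.rpow_natCast (Real.sqrt s), Real.sqrt_eq_rpow, ← Real.rpow_mul hs.le]
  simp
  ring_nf

/-- Lower bound for the volume of a cap of an ellipsoid with semi-axes `a 0, …, a (n-1)`,
cut off by the hyperplane `xₙ = aₙ - h`. -/
theorem ellipsoid_cap_volume_lower_bound
    (n : ℕ) (hn : 0 < n) (a : Fin n → ℝ) (ha : ∀ i, 0 < a i)
    (h : ℝ) (hh0 : 0 < h) (hha : h ≤ a ⟨n - 1, by omega⟩) :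
    ENNReal.ofReal
        ((2 : ℝ) ^ (((n : ℝ) + 1) / 2) *
          (volume (Metric.ball (0 : EuclideanSpace ℝ (Fin (n - 1))) 1)).toReal *
          (∏ i ∈ Finset.univ.erase (⟨n - 1, by omega⟩ : Fin n), a i) /
            (((n : ℝ) + 1) * a ⟨n - 1, by omega⟩ ^ (((n : ℝ) - 1) / 2)) *
          (h ^ (((n : ℝ) + 1) / 2) *
            (1 - h / (2 * a ⟨n - 1, by omega⟩)) ^ (((n : ℝ) - 1) / 2)))
      ≤ volume ({x : EuclideanSpace ℝ (Fin n) | ∑ i, (x i / a i) ^ 2 ≤ 1} ∩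
          {x : EuclideanSpace ℝ (Fin n) | a ⟨n - 1, by omega⟩ - h ≤ x ⟨n - 1, by omega⟩}) := by
  obtain ⟨m, rfl⟩ : ∃ m, n = m + 1 := ⟨n - 1, by omega⟩
  suffices H :
      ENNReal.ofReal
        ((2 : ℝ) ^ ((((m + 1 : ℕ) : ℝ) + 1) / 2) *
          (volume (Metric.ball (0 : EuclideanSpace ℝ (Fin m)) 1)).toReal *
          (∏ i ∈ Finset.univ.erase (Fin.last m), a i) /
            ((((m + 1 : ℕ) : ℝ) + 1) * a (Fin.last m) ^ ((((m + 1 : ℕ) : ℝ) - 1) / 2)) *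
          (h ^ ((((m + 1 : ℕ) : ℝ) + 1) / 2) *
            (1 - h / (2 * a (Fin.last m))) ^ ((((m + 1 : ℕ) : ℝ) - 1) / 2)))
      ≤ volume ({x : EuclideanSpace ℝ (Fin (m + 1)) | ∑ i, (x i / a i) ^ 2 ≤ 1} ∩
          {x : EuclideanSpace ℝ (Fin (m + 1)) | a (Fin.last m) - h ≤ x (Fin.last m)}) by
    exact H
  set A := a (Fin.last m) with hAdef
  have hA0 : 0 < A := ha _
  have hha' : h ≤ A := hha
  set b : Fin m → ℝ := fun i => a i.castSucc with hbdef
  have hb : ∀ i, 0 < b i := fun i => ha _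
  set q : ℝ := 1 - h / (2 * A) with hqdef
  have hq : 0 < q := by
    rw [hqdef, sub_pos, div_lt_one (by linarith)]
    linarith
  set c : ℝ := (2 * A - h) / A ^ 2 with hcdef
  have hc : 0 < c := div_pos (by linarith) (by positivity)
  -- The inscribed set K
  set K : Set (EuclideanSpace ℝ (Fin (m+1))) :=
    {x | (A - h ≤ x (Fin.last m) ∧ x (Fin.last m) < A) ∧
      ∑ i : Fin m, (x i.castSucc / b i) ^ 2 ≤ c * (A - x (Fin.last m))} with hKdef
  have hKsub : K ⊆ {x : EuclideanSpace ℝ (Fin (m+1)) | ∑ i, (x i / a i) ^ 2 ≤ 1} ∩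
      {x : EuclideanSpace ℝ (Fin (m+1)) | A - h ≤ x (Fin.last m)} := by
    rintro x ⟨⟨h1, h2⟩, h3⟩
    refine ⟨?_, h1⟩
    simp only [Set.mem_setOf_eq, Fin.sum_univ_castSucc]
    set t := x (Fin.last m)
    have key : c * (A - t) + (t / A) ^ 2 ≤ 1 := by
      rw [hcdef, div_pow, div_mul_eq_mul_div, div_add_div _ _ (by positivity) (by positivity),
        div_le_one (by positivity)]
      nlinarith [mul_nonneg (sub_nonneg.2 h2.le) (sub_nonneg.2 (by linarith : A - h ≤ t))]
    calc (∑ i : Fin m, (x i.castSucc / a i.castSucc) ^ 2) + (t / A) ^ 2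
        ≤ c * (A - t) + (t / A) ^ 2 := by exact add_le_add_left h3 _
      _ ≤ 1 := key
  refine le_trans ?_ (measure_mono hKsub)
  -- the Euclidean unit ball vs the pi-space set B
  set B : Set (Fin m → ℝ) := {y | ∑ i, (y i) ^ 2 ≤ 1} with hBdef
  set ω : ℝ := (volume B).toReal with hωdef
  have hBe : (MeasurableEquiv.toLp 2 (Fin m → ℝ)).symm ⁻¹' B
      = Metric.closedBall (0 : EuclideanSpace ℝ (Fin m)) 1 := by
    ext x
    have h1 : Real.sqrt (∑ i, x i ^ 2) ≤ 1 ↔ ∑ i, x i ^ 2 ≤ 1 := by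
      simpa using Real.sqrt_le_sqrt_iff (x := ∑ i, x i ^ 2) zero_le_one
    simp only [Set.mem_preimage, hBdef, Set.mem_setOf_eq, Metric.mem_closedBall,
      dist_zero_right, EuclideanSpace.norm_eq, MeasurableEquiv.toLp_symm_apply,
      Real.norm_eq_abs, sq_abs]
    exact h1.symm
  have hvolB : volume B = volume (Metric.closedBall (0 : EuclideanSpace ℝ (Fin m)) 1) := by
    rw [← hBe]
    exact ((EuclideanSpace.volume_preserving_symm_measurableEquiv_toLp (Fin m)).measure_preimage_equiv _).symm
  have hvolB_ne_top : volume B ≠ ⊤ := by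
    rw [hvolB]
    exact (isCompact_closedBall _ _).measure_lt_top.ne
  have hball_le : (volume (Metric.ball (0 : EuclideanSpace ℝ (Fin m)) 1)).toReal ≤ ω := by
    rw [hωdef, hvolB]
    exact ENNReal.toReal_mono ((isCompact_closedBall _ _).measure_lt_top.ne)
      (measure_mono Metric.ball_subset_closedBall)
  -- move to pi space and compute the volume of K
  set T : Set (Fin (m+1) → ℝ) :=
    {y | (A - h ≤ y (Fin.last m) ∧ y (Fin.last m) < A) ∧
      ∑ i : Fin m, (y i.castSucc / b i) ^ 2 ≤ c * (A - y (Fin.last m))} with hTdef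
  have hKT : volume K = volume T := by
    rw [show K = (MeasurableEquiv.toLp 2 (Fin (m+1) → ℝ)).symm ⁻¹' T from rfl]
    exact (EuclideanSpace.volume_preserving_symm_measurableEquiv_toLp _).measure_preimage_equiv _
  set U : Set (ℝ × (Fin m → ℝ)) :=
    {p | (A - h ≤ p.1 ∧ p.1 < A) ∧ ∑ i : Fin m, (p.2 i / b i) ^ 2 ≤ c * (A - p.1)} with hUdef
  have hTU : volume T = volume U := by
    have hTeq : T = (MeasurableEquiv.piFinSuccAbove (fun _ => ℝ) (Fin.last m)) ⁻¹' U := by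
      ext y
      simp [hTdef, hUdef, MeasurableEquiv.piFinSuccAbove_apply, Fin.succAbove_last, Fin.init]
    rw [hTeq]
    exact (volume_preserving_piFinSuccAbove (fun _ => ℝ) (Fin.last m)).measure_preimage_equiv _
  have hUmeas : MeasurableSet U := by
    have h1 : Measurable fun p : ℝ × (Fin m → ℝ) => ∑ i, (p.2 i / b i) ^ 2 := by
      apply Finset.measurable_sum
      intro i _
      fun_prop
    have h2 : Measurable fun p : ℝ × (Fin m → ℝ) => c * (A - p.1) := by fun_prop
    exact ((measurableSet_le measurable_const measurable_fst).inter
      (measurableSet_lt measurable_fst measurable_const)).inter (measurableSet_le h1 h2)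
  have hprod : volume U = ∫⁻ t, volume (Prod.mk t ⁻¹' U) := by
    rw [Measure.volume_eq_prod, Measure.prod_apply hUmeas]
  have hslice : ∀ t : ℝ, volume (Prod.mk t ⁻¹' U) =
      Set.indicator (Set.Ico (A - h) A)
        (fun t => ENNReal.ofReal ((c * (A - t)) ^ ((m:ℝ)/2) * ∏ i, b i) * volume B) t := by
    intro t
    by_cases ht : t ∈ Set.Ico (A - h) A
    · rw [Set.indicator_of_mem ht]
      have hpre : Prod.mk t ⁻¹' U = {y : Fin m → ℝ | ∑ i, (y i / b i) ^ 2 ≤ c * (A - t)} := by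
        ext y
        simp only [hUdef, Set.mem_preimage, Set.mem_setOf_eq]
        exact ⟨fun hy => hy.2, fun hy => ⟨⟨ht.1, ht.2⟩, hy⟩⟩
      rw [hpre, ellVol m b hb _ (mul_pos hc (by linarith [ht.2]))]
    · rw [Set.indicator_of_notMem ht]
      have hpre : Prod.mk t ⁻¹' U = ∅ := by
        ext y
        simp only [hUdef, Set.mem_preimage, Set.mem_setOf_eq, Set.mem_empty_iff_false, iff_false]
        rintro ⟨⟨ht1, ht2⟩, -⟩
        exact ht ⟨ht1, ht2⟩
      rw [hpre, measure_empty]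
  have hg : Continuous (fun t : ℝ => (c * (A - t)) ^ ((m:ℝ)/2)) := by
    apply Continuous.rpow_const (continuous_const.mul (continuous_const.sub continuous_id))
    intro t
    right
    positivity
  have hInt : IntegrableOn (fun t : ℝ => (c * (A - t)) ^ ((m:ℝ)/2)) (Set.Ico (A-h) A) :=
    (hg.integrableOn_Icc).mono_set Set.Ico_subset_Icc_self
  have hnn : 0 ≤ᵐ[volume.restrict (Set.Ico (A-h) A)]
      (fun t : ℝ => (c * (A - t)) ^ ((m:ℝ)/2)) :=
    (ae_restrict_iff' measurableSet_Ico).2 (Filter.Eventually.of_forall fun t ht =>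
      Real.rpow_nonneg (mul_nonneg hc.le (by linarith [ht.2])) _)
  have hlin : volume U = ENNReal.ofReal (∫ t in Set.Ico (A-h) A, (c * (A - t)) ^ ((m:ℝ)/2))
      * (ENNReal.ofReal (∏ i, b i) * volume B) := by
    rw [hprod]
    simp only [hslice]
    rw [lintegral_indicator measurableSet_Ico]
    rw [setLIntegral_congr_fun measurableSet_Ico (
      (fun t ht => by
        rw [ENNReal.ofReal_mul (Real.rpow_nonneg (mul_nonneg hc.le (by linarith [ht.2])) _),
          mul_assoc] :
        ∀ t ∈ Set.Ico (A-h) A,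
          ENNReal.ofReal ((c * (A - t)) ^ ((m:ℝ)/2) * ∏ i, b i) * volume B
          = ENNReal.ofReal ((c * (A - t)) ^ ((m:ℝ)/2)) * (ENNReal.ofReal (∏ i, b i) * volume B)))]
    rw [lintegral_mul_const _ hg.measurable.ennreal_ofReal]
    rw [ofReal_integral_eq_lintegral_ofReal hInt hnn]
  have hJ : ∫ t in Set.Ico (A-h) A, (c * (A - t)) ^ ((m:ℝ)/2)
      = c ^ ((m:ℝ)/2) * (h ^ ((m:ℝ)/2 + 1) / ((m:ℝ)/2 + 1)) := by
    rw [integral_Ico_eq_integral_Ioo, ← integral_Ioc_eq_integral_Ioo,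
      ← intervalIntegral.integral_of_le (by linarith : A - h ≤ A)]
    have hsub := intervalIntegral.integral_comp_sub_left (a := A - h) (b := A)
      (fun u : ℝ => (c * u) ^ ((m:ℝ)/2)) A
    simp only [sub_self, sub_sub_cancel] at hsub
    rw [hsub]
    rw [intervalIntegral.integral_congr (g := fun u => c ^ ((m:ℝ)/2) * u ^ ((m:ℝ)/2))
      (fun u hu => by
        rw [Set.uIcc_of_le hh0.le] at hu
        exact Real.mul_rpow hc.le hu.1)]
    rw [intervalIntegral.integral_const_mul, integral_rpow (Or.inl (by have : (0:ℝ) ≤ m := Nat.cast_nonneg m; linarith))]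
    rw [Real.zero_rpow (by positivity : (0:ℝ) < (m:ℝ)/2 + 1).ne']
    ring
  rw [hKT, hTU, hlin, hJ]
  rw [show volume B = ENNReal.ofReal ω from (ENNReal.ofReal_toReal hvolB_ne_top).symm]
  rw [← ENNReal.ofReal_mul (Finset.prod_nonneg fun i _ => (hb i).le),
      ← ENNReal.ofReal_mul (mul_nonneg (Real.rpow_nonneg hc.le _)
        (div_nonneg (Real.rpow_nonneg hh0.le _) (by positivity)))]
  apply ENNReal.ofReal_le_ofReal
  -- final real-number computation
  have hP : (∏ i ∈ Finset.univ.erase (Fin.last m), a i) = ∏ i, b i := by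
    apply mul_left_cancel₀ hA0.ne'
    rw [Finset.mul_prod_erase Finset.univ a (Finset.mem_univ (Fin.last m)),
      Fin.prod_univ_castSucc (f := a), mul_comm]
  rw [hP]
  push_cast
  have hcast1 : ((m:ℝ) + 1 + 1)/2 = (m:ℝ)/2 + 1 := by ring
  have hcast2 : ((m:ℝ) + 1 - 1)/2 = (m:ℝ)/2 := by ring
  rw [hcast1, hcast2]
  set P : ℝ := ∏ i, b i with hPdef
  have hP0 : 0 < P := Finset.prod_pos fun i _ => hb i
  have hω0 : 0 ≤ ω := ENNReal.toReal_nonneg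
  have hcq : c = 2 * q / A := by
    rw [hcdef, hqdef]
    field_simp
  have hcrw : c ^ ((m:ℝ)/2) = 2 ^ ((m:ℝ)/2) * q ^ ((m:ℝ)/2) / A ^ ((m:ℝ)/2) := by
    rw [hcq, Real.div_rpow (by positivity) hA0.le, Real.mul_rpow (by norm_num) hq.le]
  have h2rw : (2:ℝ) ^ ((m:ℝ)/2 + 1) = 2 ^ ((m:ℝ)/2) * 2 :=
    Real.rpow_add_one (by norm_num) _
  rw [hcrw, h2rw]
  set X : ℝ := 2 ^ ((m:ℝ)/2) with hXdef
  have hX0 : 0 < X := Real.rpow_pos_of_pos (by norm_num) _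
  set Q : ℝ := q ^ ((m:ℝ)/2) with hQdef
  have hQ0 : 0 ≤ Q := Real.rpow_nonneg hq.le _
  set Am : ℝ := A ^ ((m:ℝ)/2) with hAmdef
  have hAm0 : 0 < Am := Real.rpow_pos_of_pos hA0 _
  set Hm : ℝ := h ^ ((m:ℝ)/2 + 1) with hHmdef
  have hHm0 : 0 ≤ Hm := Real.rpow_nonneg hh0.le _
  have hM0 : (0:ℝ) < (m:ℝ) + 1 + 1 := by positivity
  calc X * 2 * (volume (Metric.ball (0 : EuclideanSpace ℝ (Fin m)) 1)).toReal * P /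
          (((m:ℝ) + 1 + 1) * Am) * (Hm * Q)
      ≤ X * 2 * ω * P / (((m:ℝ) + 1 + 1) * Am) * (Hm * Q) := by
        gcongr
    _ = X * Q / Am * (Hm / ((m:ℝ)/2 + 1)) * (P * ω) := by
        field_simp
        ring
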